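/- Let 𝔽 be a field, U a finite-dimensional 𝔽-vector space, and A₁, A₂ subspaces of U. If a linearly independent subset X ⊆ U coordinates A₁ and A₂, then X also coordinates A₁ ∩ A₂ and A₁ + A₂ (i.e., X ∩ (A₁ ∩ A₂) spans A₁ ∩ A₂ and X ∩ (A₁ + A₂) spans A₁ + A₂). -/

import Mathlib

/-- If a linearly independent subset `X ⊆ U` coordinates subspaces
`A₁` and `A₂` (i.e. `X ∩ Aᵢ` spans `Aᵢ`), then `X` also coordinates `A₁ ⊓ A₂` and
`A₁ ⊔ A₂`. -/
theorem coordinates_inf_and_sup {𝔽 U : Type*} [Field 𝔽] [AddCommGroup U] [Module 𝔽 U]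
    [FiniteDimensional 𝔽 U] (A₁ A₂ : Submodule 𝔽 U) (X : Set U)
    (hX : LinearIndependent 𝔽 (fun x : X => (x : U)))
    (h1 : Submodule.span 𝔽 (X ∩ (A₁ : Set U)) = A₁)
    (h2 : Submodule.span 𝔽 (X ∩ (A₂ : Set U)) = A₂) :
    Submodule.span 𝔽 (X ∩ ((A₁ ⊓ A₂ : Submodule 𝔽 U) : Set U)) = A₁ ⊓ A₂ ∧
    Submodule.span 𝔽 (X ∩ ((A₁ ⊔ A₂ : Submodule 𝔽 U) : Set U)) = A₁ ⊔ A₂ := by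
  classical
  constructor
  · apply le_antisymm
    · rw [Submodule.span_le]
      exact Set.inter_subset_right
    · intro u hu
      obtain ⟨hu1, hu2⟩ := Submodule.mem_inf.mp hu
      rw [← h1] at hu1
      rw [← h2] at hu2
      obtain ⟨c, hcs, hcu⟩ := Submodule.mem_span_set.mp hu1
      obtain ⟨d, hds, hdu⟩ := Submodule.mem_span_set.mp hu2
      have hcd : c = d := by
        have hsupp : c - d ∈ Finsupp.supported 𝔽 𝔽 X := by
          rw [Finsupp.mem_supported]
          intro x hx
          have hx' : x ∈ c.support ∪ d.support :=
            Finsupp.support_sub (Finset.mem_coe.mp hx)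
          rcases Finset.mem_union.mp hx' with h | h
          · exact (hcs h).1
          · exact (hds h).1
        have hzero : Finsupp.linearCombination 𝔽 id (c - d) = 0 := by
          rw [map_sub]
          have hc : Finsupp.linearCombination 𝔽 id c = u := by
            rw [Finsupp.linearCombination_apply]; exact hcu
          have hd : Finsupp.linearCombination 𝔽 id d = u := by
            rw [Finsupp.linearCombination_apply]; exact hdu
          rw [hc, hd, sub_self]
        have := (linearIndepOn_iff (v := id)).mp hX (c - d) hsupp hzero
        exact sub_eq_zero.mp this
      have hsub : (c.support : Set U) ⊆ X ∩ ((A₁ ⊓ A₂ : Submodule 𝔽 U) : Set U) := by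
        intro x hx
        have hx1 := hcs hx
        have hx2 := hds (by rwa [hcd] at hx)
        exact ⟨hx1.1, hx1.2, hx2.2⟩
      rw [Submodule.mem_span_set]
      exact ⟨c, hsub, hcu⟩
  · apply le_antisymm
    · rw [Submodule.span_le]
      exact Set.inter_subset_right
    · refine sup_le ?_ ?_
      · have h : Submodule.span 𝔽 (X ∩ (A₁ : Set U)) ≤
            Submodule.span 𝔽 (X ∩ ((A₁ ⊔ A₂ : Submodule 𝔽 U) : Set U)) :=
          Submodule.span_mono fun x hx => ⟨hx.1, Submodule.mem_sup_left hx.2⟩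
        rwa [h1] at h
      · have h : Submodule.span 𝔽 (X ∩ (A₂ : Set U)) ≤
            Submodule.span 𝔽 (X ∩ ((A₁ ⊔ A₂ : Submodule 𝔽 U) : Set U)) :=
          Submodule.span_mono fun x hx => ⟨hx.1, Submodule.mem_sup_right hx.2⟩
        rwa [h2] at h
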